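/- Let n ≥ 1 and let G, H be n×n complex Hermitian positive definite matrices. Then Re(tr(G⁻¹ · H)) ≤ (1/(n−1)!) · (Re(tr(H⁻¹ · G)))^{n−1} · Re(det H)/Re(det G). -/

import Mathlib

open Matrix
open scoped ComplexOrder
open Finset
open scoped MatrixOrder

lemma aux1 (a b : ℝ) (ha : 0 ≤ a) (hb : 0 ≤ b) (m : ℕ) :
    b^(m+1) + (m+1)*a*b^m ≤ (a+b)^(m+1) := by
  induction m with
  | zero => simp [pow_succ]; nlinarith
  | succ m ih =>
    have h1 : (0:ℝ) ≤ b ^ m := pow_nonneg hb m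
    have h4 : (0:ℝ) ≤ a + b := by linarith
    have key := mul_le_mul_of_nonneg_left ih h4
    push_cast
    have expand : (a+b) * (b^(m+1) + ((m:ℝ)+1)*a*b^m)
        = b^(m+1+1) + ((m:ℝ)+1+1)*a*b^(m+1) + ((m:ℝ)+1)*a^2*b^m := by ring
    have hnn : 0 ≤ ((m:ℝ)+1)*a^2*b^m := by positivity
    have e1 : (a+b)^(m+1+1) = (a+b) * (a+b)^(m+1) := by ring
    linarith [key, expand]

lemma aux2 {ι : Type*} (x : ι → ℝ) (s : Finset ι) (hx : ∀ i ∈ s, 0 ≤ x i) :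
    (s.card).factorial * ∏ i ∈ s, x i ≤ (∑ i ∈ s, x i)^(s.card) := by
  induction s using Finset.cons_induction with
  | empty => simp
  | cons a t hat ih =>
    have hxt : ∀ i ∈ t, 0 ≤ x i := fun i hi => hx i (Finset.mem_cons_of_mem hi)
    have hxa : 0 ≤ x a := hx a (Finset.mem_cons_self a t)
    have hT : 0 ≤ ∑ i ∈ t, x i := Finset.sum_nonneg hxt
    have hP : 0 ≤ ∏ i ∈ t, x i := Finset.prod_nonneg hxt
    rw [Finset.sum_cons, Finset.prod_cons, Finset.card_cons, Nat.factorial_succ]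
    push_cast
    calc ((t.card : ℝ) + 1) * (t.card).factorial * (x a * ∏ i ∈ t, x i)
        = ((t.card : ℝ) + 1) * x a * ((t.card).factorial * ∏ i ∈ t, x i) := by ring
      _ ≤ ((t.card : ℝ) + 1) * x a * (∑ i ∈ t, x i)^(t.card) := by
          apply mul_le_mul_of_nonneg_left (ih hxt) (by positivity)
      _ ≤ (∑ i ∈ t, x i)^(t.card+1) + ((t.card : ℝ) + 1) * x a * (∑ i ∈ t, x i)^(t.card) := by
          nlinarith [pow_nonneg hT (t.card+1)]
      _ ≤ (x a + ∑ i ∈ t, x i)^(t.card+1) := by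
          have := aux1 (x a) (∑ i ∈ t, x i) hxa hT t.card
          push_cast at this
          exact this

lemma aux3 {ι : Type*} [DecidableEq ι] (x : ι → ℝ) (s : Finset ι) (hx : ∀ i ∈ s, 0 ≤ x i) :
    (s.card - 1).factorial * ∑ i ∈ s, ∏ j ∈ s.erase i, x j ≤ (∑ i ∈ s, x i)^(s.card - 1) := by
  induction s using Finset.cons_induction with
  | empty => simp
  | cons a t hat ih =>
    have hxt : ∀ i ∈ t, 0 ≤ x i := fun i hi => hx i (Finset.mem_cons_of_mem hi)
    have hxa : 0 ≤ x a := hx a (Finset.mem_cons_self a t)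
    have hT : 0 ≤ ∑ i ∈ t, x i := Finset.sum_nonneg hxt
    have herase : ∑ i ∈ Finset.cons a t hat, ∏ j ∈ (Finset.cons a t hat).erase i, x j
        = (∏ j ∈ t, x j) + x a * ∑ i ∈ t, ∏ j ∈ t.erase i, x j := by
      rw [Finset.sum_cons]
      congr 1
      · rw [Finset.erase_cons]
      · rw [Finset.mul_sum]
        apply Finset.sum_congr rfl
        intro i hi
        have hia : i ≠ a := fun h => hat (h ▸ hi)
        rw [Finset.erase_cons_of_ne hat hia.symm, Finset.prod_cons]
    rw [herase, Finset.sum_cons, Finset.card_cons, Nat.add_sub_cancel]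
    rcases Finset.eq_empty_or_nonempty t with rfl | htne
    · simp
    · obtain ⟨k, hk⟩ : ∃ k, t.card = k + 1 :=
        ⟨t.card - 1, (Nat.succ_pred_eq_of_pos (Finset.card_pos.mpr htne)).symm⟩
      have h2 : ((t.card).factorial : ℝ) * ∑ i ∈ t, ∏ j ∈ t.erase i, x j
          ≤ (t.card : ℝ) * (∑ i ∈ t, x i)^(t.card - 1) := by
        have := ih hxt
        calc ((t.card).factorial : ℝ) * ∑ i ∈ t, ∏ j ∈ t.erase i, x j
            = (t.card : ℝ) * ((t.card - 1).factorial * ∑ i ∈ t, ∏ j ∈ t.erase i, x j) := by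
              rw [hk]; push_cast [Nat.factorial_succ, Nat.add_sub_cancel]; ring
          _ ≤ (t.card : ℝ) * (∑ i ∈ t, x i)^(t.card - 1) := by
              apply mul_le_mul_of_nonneg_left this (by positivity)
      have h1 := aux2 x t hxt
      have hsum3 : 0 ≤ ∑ i ∈ t, ∏ j ∈ t.erase i, x j :=
        Finset.sum_nonneg fun i hi => Finset.prod_nonneg fun j hj => hxt j (Finset.mem_of_mem_erase hj)
      calc ((t.card).factorial : ℝ) * ((∏ j ∈ t, x j) + x a * ∑ i ∈ t, ∏ j ∈ t.erase i, x j)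
          = (t.card).factorial * ∏ j ∈ t, x j
            + x a * ((t.card).factorial * ∑ i ∈ t, ∏ j ∈ t.erase i, x j) := by ring
        _ ≤ (∑ i ∈ t, x i)^(t.card) + x a * ((t.card : ℝ) * (∑ i ∈ t, x i)^(t.card - 1)) := by
            gcongr
        _ = (∑ i ∈ t, x i)^(k+1) + ((k:ℝ)+1) * x a * (∑ i ∈ t, x i)^k := by
            rw [hk]; push_cast [Nat.add_sub_cancel]; ring
        _ ≤ (x a + ∑ i ∈ t, x i)^(k+1) := by
            have := aux1 (x a) (∑ i ∈ t, x i) hxa hT k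
            push_cast at this; exact this
        _ = (x a + ∑ i ∈ t, x i)^(t.card) := by rw [hk]

lemma key_scalar (n : ℕ) (hn : 1 ≤ n) (μ : Fin n → ℝ) (hμ : ∀ i, 0 < μ i) :
    ∑ i, μ i ≤ (1 / ((n - 1).factorial : ℝ)) * (∑ i, (μ i)⁻¹)^(n-1) * ∏ i, μ i := by
  have hP : 0 < ∏ i, μ i := Finset.prod_pos fun i _ => hμ i
  have h3 := aux3 (fun i => (μ i)⁻¹) Finset.univ (fun i _ => (inv_nonneg.2 (hμ i).le))
  rw [Finset.card_univ, Fintype.card_fin] at h3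
  simp only at h3
  have hrw : ∑ i : Fin n, ∏ j ∈ Finset.univ.erase i, (μ j)⁻¹
      = (∑ i, μ i) / ∏ i, μ i := by
    rw [Finset.sum_div]
    apply Finset.sum_congr rfl
    intro i _
    have hpe : (∏ j, μ j) = μ i * ∏ j ∈ Finset.univ.erase i, μ j :=
      (Finset.mul_prod_erase Finset.univ μ (Finset.mem_univ i)).symm
    have hne : (∏ j ∈ Finset.univ.erase i, μ j) ≠ 0 :=
      (Finset.prod_pos fun j _ => hμ j).ne'
    rw [Finset.prod_inv_distrib, eq_div_iff hP.ne', hpe]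
    field_simp
  rw [hrw] at h3
  have hfac : (0:ℝ) < ((n-1).factorial : ℝ) := by positivity
  have h4 : ((n-1).factorial : ℝ) * (∑ i, μ i) ≤ (∑ i, (μ i)⁻¹)^(n-1) * ∏ i, μ i := by
    calc ((n-1).factorial : ℝ) * (∑ i, μ i)
        = ((n-1).factorial : ℝ) * ((∑ i, μ i) / ∏ i, μ i) * ∏ i, μ i := by
          field_simp
      _ ≤ (∑ i, (μ i)⁻¹)^(n-1) * ∏ i, μ i := mul_le_mul_of_nonneg_right h3 hP.le
  have h5 : ∑ i, μ i ≤ ((∑ i, (μ i)⁻¹)^(n-1) * ∏ i, μ i) / ((n-1).factorial : ℝ) :=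
    (le_div_iff₀ hfac).mpr (by linarith)
  calc ∑ i, μ i ≤ ((∑ i, (μ i)⁻¹)^(n-1) * ∏ i, μ i) / ((n-1).factorial : ℝ) := h5
    _ = (1 / ((n - 1).factorial : ℝ)) * (∑ i, (μ i)⁻¹)^(n-1) * ∏ i, μ i := by ring
lemma herm_trace_eq (n : ℕ) (M : Matrix (Fin n) (Fin n) ℂ) (hM : M.IsHermitian) :
    M.trace = ∑ i, (hM.eigenvalues i : ℂ) := by
  conv_lhs => rw [hM.spectral_theorem, Unitary.conjStarAlgAut_apply]
  rw [Matrix.trace_mul_comm, ← Matrix.mul_assoc, (Matrix.mem_unitaryGroup_iff').mp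
    (hM.eigenvectorUnitary).2, Matrix.one_mul, Matrix.trace_diagonal]
  rfl

lemma herm_inv_eq (n : ℕ) (M : Matrix (Fin n) (Fin n) ℂ) (hM : M.IsHermitian)
    (hμ : ∀ i, hM.eigenvalues i ≠ 0) :
    M⁻¹ = (hM.eigenvectorUnitary : Matrix (Fin n) (Fin n) ℂ) *
      diagonal (fun i => ((hM.eigenvalues i : ℂ))⁻¹) *
      star (hM.eigenvectorUnitary : Matrix (Fin n) (Fin n) ℂ) := by
  apply Matrix.inv_eq_right_inv
  set U := (hM.eigenvectorUnitary : Matrix (Fin n) (Fin n) ℂ) with hU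
  have h1 : star U * U = 1 := (Matrix.mem_unitaryGroup_iff').mp (hM.eigenvectorUnitary).2
  have h2 : U * star U = 1 := (Matrix.mem_unitaryGroup_iff).mp (hM.eigenvectorUnitary).2
  calc M * (U * diagonal (fun i => ((hM.eigenvalues i : ℂ))⁻¹) * star U)
      = (U * diagonal (RCLike.ofReal ∘ hM.eigenvalues) * star U) *
        (U * diagonal (fun i => ((hM.eigenvalues i : ℂ))⁻¹) * star U) := by
        congr 1
        exact hM.spectral_theorem.trans (Unitary.conjStarAlgAut_apply ..)
    _ = U * (diagonal (RCLike.ofReal ∘ hM.eigenvalues) * (star U * U) *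
        diagonal (fun i => ((hM.eigenvalues i : ℂ))⁻¹)) * star U := by
        simp only [Matrix.mul_assoc]
    _ = U * star U := by
        rw [h1, Matrix.mul_one, Matrix.diagonal_mul_diagonal]
        have : (fun i => (RCLike.ofReal ∘ hM.eigenvalues) i * ((hM.eigenvalues i : ℂ))⁻¹)
            = fun _ => (1:ℂ) := funext fun i => by
          simp only [Function.comp]
          exact mul_inv_cancel₀ (by simpa using hμ i)
        rw [this, Matrix.diagonal_one, Matrix.mul_one]
    _ = 1 := h2

/-- For `n×n` Hermitian positive definite matrices `G` and `H`,
`Re(tr(G⁻¹·H)) ≤ (1/(n−1)!)·(Re(tr(H⁻¹·G)))^{n−1}·Re(det H)/Re(det G)`. -/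
theorem trace_det_estimate
    (n : ℕ) (hn : 1 ≤ n)
    (G H : Matrix (Fin n) (Fin n) ℂ)
    (hG : G.PosDef) (hH : H.PosDef) :
    ((G⁻¹ * H).trace).re ≤
      (1 / ((n - 1).factorial : ℝ)) *
        (((H⁻¹ * G).trace).re) ^ (n - 1) * (H.det.re / G.det.re) := by
  classical
  set S := CFC.sqrt G with hSdef
  have hSH : S.IsHermitian := (nonneg_iff_posSemidef.mp (CFC.sqrt_nonneg G)).1
  have hSS : S * S = G := CFC.sqrt_mul_sqrt_self G (nonneg_iff_posSemidef.mpr hG.posSemidef)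
  have hdetG : G.det ≠ 0 := hG.det_pos.ne'
  have hdetH : H.det ≠ 0 := hH.det_pos.ne'
  have hdetS : S.det ≠ 0 := by
    intro h
    apply hdetG
    rw [← hSS, Matrix.det_mul, h, mul_zero]
  set M := S⁻¹ * H * S⁻¹ with hMdef
  have hSinvH : (S⁻¹)ᴴ = S⁻¹ := hSH.inv
  have hMpsd : M.PosSemidef := by
    have := hH.posSemidef.mul_mul_conjTranspose_same S⁻¹
    rwa [hSinvH] at this
  have hMH : M.IsHermitian := hMpsd.1
  -- H = S * M * S
  have hH_eq : H = S * M * S := by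
    rw [hMdef]
    rw [show S * (S⁻¹ * H * S⁻¹) * S = (S * S⁻¹) * H * (S⁻¹ * S) by
      simp only [Matrix.mul_assoc]]
    rw [Matrix.mul_nonsing_inv _ (isUnit_iff_ne_zero.mpr hdetS),
      Matrix.nonsing_inv_mul _ (isUnit_iff_ne_zero.mpr hdetS),
      Matrix.one_mul, Matrix.mul_one]
  have hdetM : M.det ≠ 0 := by
    intro h
    apply hdetH
    rw [hH_eq, Matrix.det_mul, Matrix.det_mul, h, mul_zero, zero_mul]
  set μ := hMH.eigenvalues with hμdef
  have hμpos : ∀ i, 0 < μ i := by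
    intro i
    rcases lt_or_eq_of_le (hMpsd.eigenvalues_nonneg i) with h | h
    · exact h
    · exfalso
      apply hdetM
      rw [hMH.det_eq_prod_eigenvalues]
      exact Finset.prod_eq_zero (Finset.mem_univ i) (by rw [← h]; simp)
  have hμne : ∀ i, μ i ≠ 0 := fun i => (hμpos i).ne'
  -- trace identities
  have ht1 : (G⁻¹ * H).trace = M.trace := by
    calc (G⁻¹ * H).trace = ((S * S)⁻¹ * H).trace := by rw [hSS]
      _ = (S⁻¹ * (S⁻¹ * H)).trace := by rw [Matrix.mul_inv_rev, Matrix.mul_assoc]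
      _ = ((S⁻¹ * H) * S⁻¹).trace := Matrix.trace_mul_comm _ _
      _ = M.trace := by rw [Matrix.mul_assoc, hMdef, Matrix.mul_assoc]
  have hMinv : M⁻¹ = S * H⁻¹ * S := by
    rw [hMdef, Matrix.mul_inv_rev, Matrix.mul_inv_rev,
      Matrix.nonsing_inv_nonsing_inv _ (isUnit_iff_ne_zero.mpr hdetS), Matrix.mul_assoc]
  have ht2 : (H⁻¹ * G).trace = M⁻¹.trace := by
    rw [hMinv]
    calc (H⁻¹ * G).trace = (G * H⁻¹).trace := Matrix.trace_mul_comm _ _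
      _ = ((S * S) * H⁻¹).trace := by rw [hSS]
      _ = (S * (S * H⁻¹)).trace := by rw [Matrix.mul_assoc]
      _ = ((S * H⁻¹) * S).trace := Matrix.trace_mul_comm _ _
  -- traces via eigenvalues
  have htr1 : ((G⁻¹ * H).trace).re = ∑ i, μ i := by
    rw [ht1, herm_trace_eq n M hMH]
    push_cast
    simp [Complex.ext_iff]
    rfl
  have htr2 : ((H⁻¹ * G).trace).re = ∑ i, (μ i)⁻¹ := by
    rw [ht2, herm_inv_eq n M hMH hμne, Matrix.trace_mul_comm, ← Matrix.mul_assoc,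
      (Matrix.mem_unitaryGroup_iff').mp (hMH.eigenvectorUnitary).2, Matrix.one_mul,
      Matrix.trace_diagonal]
    push_cast
    simp [Complex.ext_iff]
    rfl
  -- determinant identity
  have hdG : G.det = (G.det.re : ℂ) := by
    have := hG.det_pos
    rw [Complex.lt_def] at this
    exact Complex.ext rfl (by simpa using this.2.symm)
  have hdM : M.det = ((∏ i, μ i : ℝ) : ℂ) := by
    rw [hMH.det_eq_prod_eigenvalues]
    push_cast
    rfl
  have hdet_ratio : H.det.re / G.det.re = ∏ i, μ i := by
    have hg2 : G.det = S.det * S.det := by rw [← hSS, Matrix.det_mul]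
    have h1 : H.det = G.det * M.det := by
      rw [hH_eq, Matrix.det_mul, Matrix.det_mul, hg2]
      ring
    have hGre : G.det.re ≠ 0 := by
      intro h
      apply hdetG
      rw [hdG, h]; simp
    rw [h1, hdG, hdM]
    rw [← Complex.ofReal_mul]
    rw [Complex.ofReal_re]
    field_simp
    rw [Complex.ofReal_re, mul_div_cancel_left₀ _ hGre]
  rw [htr1, htr2, hdet_ratio]
  exact key_scalar n hn μ hμpos
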